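/- Let A_⋆ ∈ ℝ^{n×n}. For any vector x ∈ ℝ^n and any integer k ≥ n, the set {A ∈ ℝ^{n×n} : A^i x = A_⋆^i x for i = 1,…,k} equals the set {A ∈ ℝ^{n×n} : A^i x = A_⋆^i x for i = 1,…,n}. -/

import Mathlib

open Matrix Finset

/-- Cayley–Hamilton consequence: `A ^ n` is a linear combination of lower powers. -/
lemma sum_mulVec' {n : ℕ} {s : Finset ℕ} (M : ℕ → Matrix (Fin n) (Fin n) ℝ)
    (x : Fin n → ℝ) : (∑ j ∈ s, M j) *ᵥ x = ∑ j ∈ s, (M j) *ᵥ x := by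
  classical
  induction s using Finset.induction with
  | empty => simp
  | insert _ _ hj ih => simp [Finset.sum_insert hj, Matrix.add_mulVec, ih]

lemma mulVec_sum' {n : ℕ} {s : Finset ℕ} (M : Matrix (Fin n) (Fin n) ℝ)
    (v : ℕ → Fin n → ℝ) : M *ᵥ (∑ j ∈ s, v j) = ∑ j ∈ s, M *ᵥ (v j) := by
  classical
  induction s using Finset.induction with
  | empty => simp
  | insert _ _ hj ih => simp [Finset.sum_insert hj, Matrix.mulVec_add, ih]

lemma pow_dim_eq_lin_comb {n : ℕ} (A : Matrix (Fin n) (Fin n) ℝ) :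
    ∃ c : ℕ → ℝ, A ^ n = ∑ i ∈ Finset.range n, c i • A ^ i := by
  have hCH := Matrix.aeval_self_charpoly A
  have hdeg : A.charpoly.natDegree = n := by rw [A.charpoly_natDegree_eq_dim, Fintype.card_fin]
  have hmon : A.charpoly.Monic := A.charpoly_monic
  have hsum := Polynomial.aeval_eq_sum_range (p := A.charpoly) A
  rw [hCH, hdeg, Finset.sum_range_succ] at hsum
  have hlead : A.charpoly.coeff n = 1 := by
    have := hmon.leadingCoeff
    rwa [Polynomial.leadingCoeff, hdeg] at this
  rw [hlead, one_smul] at hsum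
  refine ⟨fun i => -(A.charpoly.coeff i), ?_⟩
  have : A ^ n = -∑ i ∈ Finset.range n, A.charpoly.coeff i • A ^ i := by
    linear_combination (norm := abel) -hsum
  rw [this, ← Finset.sum_neg_distrib]
  simp [neg_smul]

/-- For identifying a linear system from a single trajectory started at `x`,
observations beyond the `n`-th step carry no extra information:
for `k ≥ n`, the set of matrices agreeing with `A⋆` on `x, …, A⋆ᵏ x` equals the set
agreeing on `x, …, A⋆ⁿ x`. -/
theorem stmt_5 (n : ℕ) (Astar : Matrix (Fin n) (Fin n) ℝ) (x : Fin n → ℝ)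
    (k : ℕ) (hk : n ≤ k) :
    {A : Matrix (Fin n) (Fin n) ℝ | ∀ i, 1 ≤ i → i ≤ k → (A ^ i) *ᵥ x = (Astar ^ i) *ᵥ x} =
      {A : Matrix (Fin n) (Fin n) ℝ | ∀ i, 1 ≤ i → i ≤ n → (A ^ i) *ᵥ x = (Astar ^ i) *ᵥ x} := by
  rcases Nat.eq_zero_or_pos n with hn | hn
  · subst hn
    ext A
    simp only [Set.mem_setOf_eq]
    constructor <;> intro _ i _ _ <;> exact Subsingleton.elim _ _
  ext A
  simp only [Set.mem_setOf_eq]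
  constructor
  · intro h i h1 h2; exact h i h1 (h2.trans hk)
  intro h i h1 h2
  obtain ⟨c, hc⟩ := pow_dim_eq_lin_comb A
  -- strengthen: prove for all m ≥ n, all i ≤ m
  suffices H : ∀ m, n ≤ m → ∀ i, 1 ≤ i → i ≤ m → (A ^ i) *ᵥ x = (Astar ^ i) *ᵥ x by
    exact H k hk i h1 h2
  intro m hm
  induction m, hm using Nat.le_induction with
  | base => exact h
  | succ m hnm IH =>
    intro i hi1 him
    rcases Nat.lt_or_ge i (m + 1) with hlt | hge
    · exact IH i hi1 (Nat.lt_succ_iff.mp hlt)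
    have hi : i = m + 1 := le_antisymm him hge
    subst hi
    -- key computation
    have hAn : (A ^ n) *ᵥ x = (Astar ^ n) *ᵥ x := IH n hn hnm
    have hsumEq : ∑ j ∈ Finset.range n, c j • ((A ^ j) *ᵥ x)
        = ∑ j ∈ Finset.range n, c j • ((Astar ^ j) *ᵥ x) := by
      refine Finset.sum_congr rfl fun j hj => ?_
      rcases Nat.eq_zero_or_pos j with hj0 | hj0
      · subst hj0; simp
      · rw [IH j hj0 (by have := Finset.mem_range.mp hj; omega)]
    have hsplit : m + 1 = (m + 1 - n) + n := (Nat.sub_add_cancel (le_trans hnm (Nat.le_succ m))).symm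
    have hpos : 1 ≤ m + 1 - n := by omega
    calc (A ^ (m + 1)) *ᵥ x
        = (A ^ (m + 1 - n) * A ^ n) *ᵥ x := by rw [← pow_add, ← hsplit]
      _ = (A ^ (m + 1 - n)) *ᵥ ((A ^ n) *ᵥ x) := by rw [Matrix.mulVec_mulVec]
      _ = (A ^ (m + 1 - n)) *ᵥ (∑ j ∈ Finset.range n, c j • ((A ^ j) *ᵥ x)) := by
          rw [hc, sum_mulVec' (fun j => c j • A ^ j) x]
          simp only [Matrix.smul_mulVec]
      _ = ∑ j ∈ Finset.range n, c j • ((A ^ (m + 1 - n + j)) *ᵥ x) := by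
          rw [mulVec_sum' _ _]
          refine Finset.sum_congr rfl fun j _ => ?_
          rw [Matrix.mulVec_smul, Matrix.mulVec_mulVec, ← pow_add]
      _ = ∑ j ∈ Finset.range n, c j • ((Astar ^ (m + 1 - n + j)) *ᵥ x) := by
          refine Finset.sum_congr rfl fun j hj => ?_
          have hjn := Finset.mem_range.mp hj
          rw [IH (m + 1 - n + j) (by omega) (by omega)]
      _ = (Astar ^ (m + 1 - n)) *ᵥ (∑ j ∈ Finset.range n, c j • ((Astar ^ j) *ᵥ x)) := by
          rw [mulVec_sum' _ _]
          refine Finset.sum_congr rfl fun j _ => ?_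
          rw [Matrix.mulVec_smul, Matrix.mulVec_mulVec, ← pow_add]
      _ = (Astar ^ (m + 1 - n)) *ᵥ ((Astar ^ n) *ᵥ x) := by
          rw [← hsumEq]
          rw [← hAn, hc, sum_mulVec' (fun j => c j • A ^ j) x]
          simp only [Matrix.smul_mulVec]
      _ = (Astar ^ (m + 1)) *ᵥ x := by rw [Matrix.mulVec_mulVec, ← pow_add, ← hsplit]
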